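/- arXiv:2511.00899 — 6 statements merged into one kernel-verified Lean document; each statement's English description precedes it below -/
import Mathlib

section
/- (Soundness of the Negative Introspection axiom.) For every trustworthiness model, every world w ∈ W, every dataset U ⊆ V, all datasets T, X ⊆ V, and every formula φ ∈ Φ, if w,U ⊮ B^T_X φ, then w,U ⊩ B^∅_X ¬B^T_X φ. -/
/-- Formulas of the Dynamic Logic of Trust-Based Beliefs over data variables `V`
and atomic propositions `A`:  p | ¬φ | φ→φ | B^T_X φ | [X]φ. -/
inductive Formula (V A : Type) : Type
  | atom : A → Formula V A
  | neg  : Formula V A → Formula V A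
  | imp  : Formula V A → Formula V A → Formula V A
  | bel  : Set V → Set V → Formula V A → Formula V A   -- `bel T X φ` is B^T_X φ
  | ann  : Set V → Formula V A → Formula V A           -- `ann X φ` is [X]φ

/-- A trustworthiness model `(W, {∼ₓ}, {𝒯_w}, π)`. -/
structure TModel (V A : Type) where
  W : Type
  sim : V → W → W → Prop
  sim_equiv : ∀ x : V, Equivalence (sim x)
  trust : W → Set V
  pi : A → Set (W × Set V)

namespace TModel

variable {V A : Type} (M : TModel V A)

/-- `w ∼_X u` iff `w ∼ₓ u` for each `x ∈ X`. -/
def simSet (X : Set V) (w u : M.W) : Prop := ∀ x ∈ X, M.sim x w u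

/-- The satisfaction relation `w,U ⊩ φ`. -/
def Sat : Formula V A → M.W → Set V → Prop
  | .atom p, w, U => (w, U) ∈ M.pi p
  | .neg φ, w, U => ¬ Sat φ w U
  | .imp φ ψ, w, U => Sat φ w U → Sat ψ w U
  | .bel T X φ, w, U => ∀ w' : M.W, M.simSet (X ∪ U) w w' → T ⊆ M.trust w' → Sat φ w' U
  | .ann X φ, w, U => Sat φ w (U ∪ X)

end TModel

/-- Soundness of the Negative Introspection axiom: if `w,U ⊮ B^T_X φ`,
then `w,U ⊩ B^∅_X ¬B^T_X φ`. -/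
theorem negative_introspection_sound {V A : Type} (M : TModel V A) (w : M.W)
    (U T X : Set V) (φ : Formula V A)
    (h : ¬ M.Sat (.bel T X φ) w U) :
    M.Sat (.bel ∅ X (.neg (.bel T X φ))) w U := by
  intro w' hsim _ hsat
  apply h
  intro w'' hsim' htr
  exact hsat w'' (fun x hx => (M.sim_equiv x).trans ((M.sim_equiv x).symm (hsim x hx)) (hsim' x hx)) htr
end

section
/- (Soundness of the Trust axiom.) For every trustworthiness model, every world w ∈ W, every dataset U ⊆ V, all datasets T, X, Y ⊆ V, and every formula φ ∈ Φ, we have w,U ⊩ B^T_X(B^T_Y φ → φ). -/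
/-- Soundness of the Trust axiom: `w,U ⊩ B^T_X (B^T_Y φ → φ)`. -/
theorem trust_axiom_sound {V A : Type} (M : TModel V A) (w : M.W)
    (U T X Y : Set V) (φ : Formula V A) :
    M.Sat (.bel T X (.imp (.bel T Y φ) φ)) w U := by
  intro w' _ htrust hbel
  exact hbel w' (fun x _ => (M.sim_equiv x).refl w') htrust
end

section
/- (Soundness of the Commutativity axiom.) For every trustworthiness model, every world w ∈ W, every dataset U ⊆ V, all datasets T, X, Y ⊆ V, and every formula φ ∈ Φ, we have w,U ⊩ [Y]B^T_X φ if and only if w,U ⊩ B^T_{X∪Y}[Y]φ. -/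
/-- Soundness of the Commutativity axiom: `w,U ⊩ [Y]B^T_X φ` iff `w,U ⊩ B^T_{X∪Y}[Y]φ`. -/
theorem commutativity_sound {V A : Type} (M : TModel V A) (w : M.W)
    (U T X Y : Set V) (φ : Formula V A) :
    M.Sat (.ann Y (.bel T X φ)) w U ↔ M.Sat (.bel T (X ∪ Y) (.ann Y φ)) w U := by
  simp only [TModel.Sat, TModel.simSet]
  constructor
  · intro h w' hs ht
    exact h w' (fun x hx => hs x (by simp only [Set.mem_union] at hx ⊢; tauto)) ht
  · intro h w' hs ht
    exact h w' (fun x hx => hs x (by simp only [Set.mem_union] at hx ⊢; tauto)) ht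
end

section
/- (Strong soundness, Theorem 1.) For any dataset U ⊆ V, any world w of a trustworthiness model, any set of formulas F ⊆ Φ, and any formula φ ∈ Φ, if w,U ⊩ f for each formula f ∈ F and F ⊢ φ, then w,U ⊩ φ. -/
/-- `φ ∧ ψ`, defined through `¬` and `→` in the usual way. -/
def Formula.conj {V A : Type} (φ ψ : Formula V A) : Formula V A :=
  .neg (.imp φ (.neg ψ))

/-- `φ ↔ ψ`, defined through `¬` and `→` in the usual way. -/
def Formula.iff {V A : Type} (φ ψ : Formula V A) : Formula V A :=
  Formula.conj (.imp φ ψ) (.imp ψ φ)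

/-- Propositional tautologies in the language `Φ`: formulas true under every
assignment of truth values to formulas respecting `¬` and `→`. -/
def Tautology {V A : Type} (φ : Formula V A) : Prop :=
  ∀ v : Formula V A → Prop,
    (∀ ψ, v (.neg ψ) ↔ ¬ v ψ) →
    (∀ ψ χ, v (.imp ψ χ) ↔ (v ψ → v χ)) →
    v φ

/-- Theorems of the Dynamic Logic of Trust-Based Beliefs: `⊢ φ`. -/
inductive Prv {V A : Type} : Formula V A → Prop
  | taut {φ : Formula V A} : Tautology φ → Prv φ
  | truth (X : Set V) (φ : Formula V A) : Prv (.imp (.bel ∅ X φ) φ)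
  | distB (T X : Set V) (φ ψ : Formula V A) :
      Prv (.imp (.bel T X (.imp φ ψ)) (.imp (.bel T X φ) (.bel T X ψ)))
  | distA (X : Set V) (φ ψ : Formula V A) :
      Prv (.imp (.ann X (.imp φ ψ)) (.imp (.ann X φ) (.ann X ψ)))
  | negIntro (T X : Set V) (φ : Formula V A) :
      Prv (.imp (.neg (.bel T X φ)) (.bel ∅ X (.neg (.bel T X φ))))
  | mono {T T' X X' : Set V} (φ : Formula V A) :
      T ⊆ T' → X ⊆ X' → Prv (.imp (.bel T X φ) (.bel T' X' φ))
  | trust (T X Y : Set V) (φ : Formula V A) : Prv (.bel T X (.imp (.bel T Y φ) φ))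
  | comb (X Y : Set V) (φ : Formula V A) :
      Prv (Formula.iff (.ann X (.ann Y φ)) (.ann (X ∪ Y) φ))
  | comm (T X Y : Set V) (φ : Formula V A) :
      Prv (Formula.iff (.ann Y (.bel T X φ)) (.bel T (Y ∪ X) (.ann Y φ)))
  | dual (X : Set V) (φ : Formula V A) :
      Prv (Formula.iff (.neg (.ann X φ)) (.ann X (.neg φ)))
  | empty (φ : Formula V A) : Prv (Formula.iff (.ann ∅ φ) φ)
  | mp {φ ψ : Formula V A} : Prv (.imp φ ψ) → Prv φ → Prv ψ
  | necB (T X : Set V) {φ : Formula V A} : Prv φ → Prv (.bel T X φ)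
  | necA (X : Set V) {φ : Formula V A} : Prv φ → Prv (.ann X φ)

/-- `F ⊢ φ`: φ is derivable from theorems of the system and the set of
additional assumptions `F` using the Modus Ponens inference rule only. -/
inductive Deriv {V A : Type} (F : Set (Formula V A)) : Formula V A → Prop
  | thm {φ : Formula V A} : Prv φ → Deriv F φ
  | hyp {φ : Formula V A} : φ ∈ F → Deriv F φ
  | mp {φ ψ : Formula V A} : Deriv F (.imp φ ψ) → Deriv F φ → Deriv F ψ

/-- A set of formulas is consistent if no formula and its negation are both derivable. -/
def Consistent {V A : Type} (F : Set (Formula V A)) : Prop :=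
  ¬ ∃ φ : Formula V A, Deriv F φ ∧ Deriv F (.neg φ)

/-- A maximal consistent set: a consistent set not properly contained in any consistent set. -/
def MaxConsistent {V A : Type} (F : Set (Formula V A)) : Prop :=
  Consistent F ∧ ∀ G : Set (Formula V A), F ⊆ G → Consistent G → G = F

lemma TModel.simSet_refl {V A : Type} (M : TModel V A) (X : Set V) (w : M.W) :
    M.simSet X w w := fun x _ => (M.sim_equiv x).refl w

lemma TModel.sat_congr {V A : Type} (M : TModel V A) (φ : Formula V A) (w : M.W)
    {U U' : Set V} (h : U = U') : M.Sat φ w U ↔ M.Sat φ w U' := by subst h; rfl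

lemma soundness_prv {V A : Type} (M : TModel V A) {φ : Formula V A}
    (h : Prv φ) : ∀ (w : M.W) (U : Set V), M.Sat φ w U := by
  induction h with
  | @taut φ h =>
    intro w U
    exact h (fun ψ => M.Sat ψ w U) (fun ψ => Iff.rfl) (fun ψ χ => Iff.rfl)
  | truth X φ =>
    intro w U h
    exact h w (M.simSet_refl _ w) (Set.empty_subset _)
  | distB T X φ ψ =>
    intro w U h1 h2 w' hs ht
    exact h1 w' hs ht (h2 w' hs ht)
  | distA X φ ψ =>
    intro w U h1 h2
    exact h1 h2
  | negIntro T X φ =>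
    intro w U h w' hs _ hb
    apply h
    intro w'' hs' ht'
    apply hb
    · intro x hx
      exact (M.sim_equiv x).trans ((M.sim_equiv x).symm (hs x hx)) (hs' x hx)
    · exact ht'
  | @mono T T' X X' φ hT hX =>
    intro w U h w' hs ht
    exact h w' (fun x hx => hs x (Or.elim hx (fun h1 => Or.inl (hX h1)) Or.inr))
      (hT.trans ht)
  | trust T X Y φ =>
    intro w U w' _ ht h
    exact h w' (M.simSet_refl _ w') ht
  | comb X Y φ =>
    intro w U
    have : (U ∪ X) ∪ Y = U ∪ (X ∪ Y) := Set.union_assoc U X Y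
    have h := (M.sat_congr φ w this)
    exact fun hc => hc (fun h1 => h.mp h1) (fun h1 => h.mpr h1)
  | comm T X Y φ =>
    intro w U
    have key : ∀ w' : M.W, M.simSet (X ∪ (U ∪ Y)) w w' ↔ M.simSet ((Y ∪ X) ∪ U) w w' := by
      intro w'
      have : X ∪ (U ∪ Y) = (Y ∪ X) ∪ U := by
        ext x; simp [Set.mem_union]; tauto
      rw [this]
    intro hc
    apply hc
    · intro h1 w' hs ht
      exact h1 w' ((key w').mpr hs) ht
    · intro h1 w' hs ht
      exact h1 w' ((key w').mp hs) ht
  | dual X φ =>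
    intro w U hc
    exact hc id id
  | empty φ =>
    intro w U
    have h := M.sat_congr φ w (Set.union_empty U)
    exact fun hc => hc h.mp h.mpr
  | mp h1 h2 ih1 ih2 =>
    intro w U
    exact ih1 w U (ih2 w U)
  | necB T X h ih =>
    intro w U w' _ _
    exact ih w' U
  | necA X h ih =>
    intro w U
    exact ih w (U ∪ X)

/-- Strong soundness (Theorem 1): if `w,U ⊩ f` for each `f ∈ F` and `F ⊢ φ`,
then `w,U ⊩ φ`. -/
theorem strong_soundness {V A : Type} (M : TModel V A) (w : M.W) (U : Set V)
    (F : Set (Formula V A)) (φ : Formula V A)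
    (hF : ∀ f ∈ F, M.Sat f w U) (h : Deriv F φ) :
    M.Sat φ w U := by
  induction h with
  | thm h => exact soundness_prv M h w U
  | hyp h => exact hF _ h
  | mp h1 h2 ih1 ih2 => exact ih1 ih2
end

section
/- (Positive introspection, Lemma 4.) For all datasets T, X ⊆ V and every formula φ ∈ Φ, the formula B^T_X φ → B^∅_X B^T_X φ is a theorem: ⊢ B^T_X φ → B^∅_X B^T_X φ. -/
lemma Prv.chain {V A : Type} {a b c : Formula V A}
    (h1 : Prv (.imp a b)) (h2 : Prv (.imp b c)) : Prv (.imp a c) := by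
  have t : Tautology (Formula.imp (.imp a b) (.imp (.imp b c) (.imp a c))) := by
    intro v hn hi; simp only [hi]; tauto
  exact Prv.mp (Prv.mp (Prv.taut t) h1) h2

lemma Prv.contrapose {V A : Type} {a b : Formula V A}
    (h : Prv (.imp a b)) : Prv (.imp (.neg b) (.neg a)) := by
  have t : Tautology (Formula.imp (.imp a b) (.imp (.neg b) (.neg a))) := by
    intro v hn hi; simp only [hi, hn]; tauto
  exact Prv.mp (Prv.taut t) h

lemma Prv.dne {V A : Type} (a : Formula V A) : Prv (Formula.imp (.neg (.neg a)) a) := by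
  apply Prv.taut; intro v hn hi; simp only [hi, hn]; tauto

lemma Prv.dni {V A : Type} (a : Formula V A) : Prv (Formula.imp a (.neg (.neg a))) := by
  apply Prv.taut; intro v hn hi; simp only [hi, hn]; tauto

/-- Positive introspection (Lemma 4): `⊢ B^T_X φ → B^∅_X B^T_X φ`. -/
theorem positive_introspection {V A : Type} (T X : Set V) (φ : Formula V A) :
    Prv (Formula.imp (.bel T X φ) (.bel ∅ X (.bel T X φ))) := by
  set B : Formula V A := .bel T X φ with hB
  -- 1. ¬B → K¬B  (negative introspection)
  have h1 : Prv (Formula.imp (.neg B) (.bel ∅ X (.neg B))) := Prv.negIntro T X φ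
  -- 2. ¬K¬B → B
  have h2 : Prv (Formula.imp (.neg (.bel ∅ X (.neg B))) B) :=
    Prv.chain (Prv.contrapose h1) (Prv.dne B)
  -- 4. K¬K¬B → KB
  have h4 : Prv (Formula.imp (.bel ∅ X (.neg (.bel ∅ X (.neg B)))) (.bel ∅ X B)) :=
    Prv.mp (Prv.distB ∅ X _ _) (Prv.necB ∅ X h2)
  -- 5. B → ¬K¬B  (from truth)
  have h5 : Prv (Formula.imp B (.neg (.bel ∅ X (.neg B)))) :=
    Prv.chain (Prv.dni B) (Prv.contrapose (Prv.truth X (.neg B)))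
  -- 6. ¬K¬B → K¬K¬B  (negative introspection at ¬B)
  have h6 : Prv (Formula.imp (.neg (.bel ∅ X (.neg B)))
      (.bel ∅ X (.neg (.bel ∅ X (.neg B))))) := Prv.negIntro ∅ X (.neg B)
  exact Prv.chain h5 (Prv.chain h6 h4)
end

section
/- (Single transfer, Lemma 7.) In the canonical model M(T₀,F₀), for any formula B^T_Y φ ∈ Φ and any two adjacent worlds w' = T₀,F₀,…,X_{n−1},T_{n−1},F_{n−1} and w = T₀,F₀,…,X_{n−1},T_{n−1},F_{n−1},Xₙ,Tₙ,Fₙ, if Y ⊆ Xₙ, then B^T_Y φ ∈ F(w') if and only if B^T_Y φ ∈ F(w). -/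
/-- A triple `(Xᵢ, Tᵢ, Fᵢ)` labelling one step of a canonical-model world. -/
abbrev Triple (V A : Type) := Set V × Set V × Set (Formula V A)

/-- Condition on a node labelled `T, F` of the canonical tree: `F` is a maximal
consistent set and `B^T_Y φ → φ ∈ F` for every dataset `Y` and formula `φ`. -/
def NodeOk {V A : Type} (T : Set V) (F : Set (Formula V A)) : Prop :=
  MaxConsistent F ∧ ∀ (Y : Set V) (φ : Formula V A), Formula.imp (.bel T Y φ) φ ∈ F

/-- `T(w)`: the last dataset `Tₙ` of the world `w` (worlds are written as lists of
triples with the most recent triple first; the empty list is the root `T₀, F₀`). -/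
def worldT {V A : Type} (T₀ : Set V) : List (Triple V A) → Set V
  | [] => T₀
  | (_, T, _) :: _ => T

/-- `F(w)`: the last set of formulas `Fₙ` of the world `w`. -/
def worldF {V A : Type} (F₀ : Set (Formula V A)) : List (Triple V A) → Set (Formula V A)
  | [] => F₀
  | (_, _, F) :: _ => F

/-- Worlds of the canonical model `M(T₀,F₀)`: sequences
`T₀,F₀,X₁,T₁,F₁,…,Xₙ,Tₙ,Fₙ` such that each `Fᵢ` is a maximal consistent set with
(a) `ψ ∈ Fᵢ` whenever `B^∅_{Xᵢ} ψ ∈ F_{i-1}` (for `i > 0`), and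
(b) `B^{Tᵢ}_Y φ → φ ∈ Fᵢ` for every dataset `Y` and formula `φ`. -/
def IsWorld {V A : Type} (T₀ : Set V) (F₀ : Set (Formula V A)) :
    List (Triple V A) → Prop
  | [] => NodeOk T₀ F₀
  | (X, T, F) :: rest =>
      IsWorld T₀ F₀ rest ∧ NodeOk T F ∧
        ∀ ψ : Formula V A, Formula.bel ∅ X ψ ∈ worldF F₀ rest → ψ ∈ F

/-- `u ∼ₓ v` in the canonical model: every edge along the unique simple path in the
tree between `u` and `v` is labelled with the variable `x`; equivalently, `u` and `v`
have a common ancestor `c` such that every edge between `c` and `u` and every edge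
between `c` and `v` is labelled with `x`. -/
def csim {V A : Type} (x : V) (u v : List (Triple V A)) : Prop :=
  ∃ c d₁ d₂ : List (Triple V A),
    u = d₁ ++ c ∧ v = d₂ ++ c ∧ (∀ t ∈ d₁, x ∈ t.1) ∧ (∀ t ∈ d₂, x ∈ t.1)

section SingleTransferAux

variable {V A : Type}

/-- Any propositional tautology over concrete subformulas. -/

private lemma prv_chain {a b c : Formula V A}
    (h1 : Prv (.imp a b)) (h2 : Prv (.imp b c)) : Prv (.imp a c) := by
  have t : Tautology (Formula.imp (.imp a b) (.imp (.imp b c) (.imp a c))) := by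
    intro v hn hi; simp only [hi]; tauto
  exact Prv.mp (Prv.mp (Prv.taut t) h1) h2

private lemma prv_contra {a b : Formula V A}
    (h : Prv (.imp a b)) : Prv (.imp (.neg b) (.neg a)) := by
  have t : Tautology (Formula.imp (.imp a b) (.imp (.neg b) (.neg a))) := by
    intro v hn hi; simp only [hi, hn]; tauto
  exact Prv.mp (Prv.taut t) h

/-- `¬¬a → a` -/
private lemma prv_dne (a : Formula V A) : Prv (Formula.imp (.neg (.neg a)) a) := by
  have t : Tautology (Formula.imp (.neg (.neg a)) a) := by
    intro v hn hi; simp only [hi, hn]; tauto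
  exact Prv.taut t

/-- `a → ¬¬a` -/
private lemma prv_dni (a : Formula V A) : Prv (Formula.imp a (.neg (.neg a))) := by
  have t : Tautology (Formula.imp a (.neg (.neg a))) := by
    intro v hn hi; simp only [hi, hn]; tauto
  exact Prv.taut t

/-- Key modal theorem: `B^T_Y φ → B^∅_{Xₙ} B^T_Y φ`, given `Y ⊆ Xₙ`. -/
private lemma prv_pos_intro (T Y Xₙ : Set V) (φ : Formula V A) (hY : Y ⊆ Xₙ) :
    Prv (Formula.imp (.bel T Y φ) (.bel ∅ Xₙ (.bel T Y φ))) := by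
  set B : Formula V A := .bel T Y φ with hB
  -- five' : ¬B → N ¬B  where N = bel ∅ Xₙ
  have five' : Prv (Formula.imp (.neg B) (.bel ∅ Xₙ (.neg B))) :=
    prv_chain (Prv.negIntro T Y φ) (Prv.mono _ (subset_refl ∅) hY)
  -- c1 : ¬N¬B → B
  have c1 : Prv (Formula.imp (.neg (.bel ∅ Xₙ (.neg B))) B) :=
    prv_chain (prv_contra five') (prv_dne B)
  -- nec + dist : N ¬N¬B → N B
  have d1 : Prv (Formula.imp (.bel ∅ Xₙ (.neg (.bel ∅ Xₙ (.neg B)))) (.bel ∅ Xₙ B)) :=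
    Prv.mp (Prv.distB ∅ Xₙ _ _) (Prv.necB ∅ Xₙ c1)
  -- B → ¬N¬B  via Truth
  have t1 : Prv (Formula.imp B (.neg (.bel ∅ Xₙ (.neg B)))) :=
    prv_chain (prv_dni B) (prv_contra (Prv.truth Xₙ (.neg B)))
  -- 5'' : ¬N¬B → N ¬N¬B
  have five'' : Prv (Formula.imp (.neg (.bel ∅ Xₙ (.neg B)))
      (.bel ∅ Xₙ (.neg (.bel ∅ Xₙ (.neg B))))) :=
    Prv.negIntro ∅ Xₙ (.neg B)
  exact prv_chain t1 (prv_chain five'' d1)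

/-- `¬B → N¬B` for `Y ⊆ Xₙ`. -/
private lemma prv_neg_intro' (T Y Xₙ : Set V) (φ : Formula V A) (hY : Y ⊆ Xₙ) :
    Prv (Formula.imp (.neg (.bel T Y φ)) (.bel ∅ Xₙ (.neg (.bel T Y φ)))) :=
  prv_chain (Prv.negIntro T Y φ) (Prv.mono _ (subset_refl ∅) hY)

private lemma deriv_mono {F G : Set (Formula V A)} (h : F ⊆ G) {φ : Formula V A}
    (hd : Deriv F φ) : Deriv G φ := by
  induction hd with
  | thm h' => exact Deriv.thm h'
  | hyp h' => exact Deriv.hyp (h h')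
  | mp _ _ ih1 ih2 => exact Deriv.mp ih1 ih2

private lemma deriv_insert {F : Set (Formula V A)} {φ ψ : Formula V A}
    (hφ : Deriv F φ) (hd : Deriv (insert φ F) ψ) : Deriv F ψ := by
  induction hd with
  | thm h' => exact Deriv.thm h'
  | hyp h' =>
    rcases h' with h' | h'
    · exact h' ▸ hφ
    · exact Deriv.hyp h'
  | mp _ _ ih1 ih2 => exact Deriv.mp ih1 ih2

/-- Deduction theorem. -/
private lemma deduction {F : Set (Formula V A)} {φ ψ : Formula V A}
    (hd : Deriv (insert φ F) ψ) : Deriv F (.imp φ ψ) := by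
  induction hd with
  | @thm χ h' =>
    have tk : Tautology (Formula.imp χ (.imp φ χ)) := by
      intro v hn hi; simp only [hi]; tauto
    exact Deriv.mp (Deriv.thm (Prv.taut tk)) (Deriv.thm h')
  | @hyp χ h' =>
    rcases h' with h' | h'
    · subst h'
      have ti : Tautology (Formula.imp χ χ) := by
        intro v hn hi; simp only [hi]; tauto
      exact Deriv.thm (Prv.taut ti)
    · have tk : Tautology (Formula.imp χ (.imp φ χ)) := by
        intro v hn hi; simp only [hi]; tauto
      exact Deriv.mp (Deriv.thm (Prv.taut tk)) (Deriv.hyp h')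
  | @mp χ ρ _ _ ih1 ih2 =>
    have ts : Tautology (Formula.imp (.imp φ (.imp χ ρ))
        (.imp (.imp φ χ) (.imp φ ρ))) := by
      intro v hn hi; simp only [hi]; tauto
    exact Deriv.mp (Deriv.mp (Deriv.thm (Prv.taut ts)) ih1) ih2

/-- A maximal consistent set contains everything it derives. -/
private lemma mem_of_deriv {F : Set (Formula V A)} (hF : MaxConsistent F)
    {φ : Formula V A} (hd : Deriv F φ) : φ ∈ F := by
  have hcons : Consistent (insert φ F) := by
    rintro ⟨χ, h1, h2⟩
    exact hF.1 ⟨χ, deriv_insert hd h1, deriv_insert hd h2⟩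
  have := hF.2 (insert φ F) (Set.subset_insert _ _) hcons
  rw [← this]; exact Set.mem_insert _ _

/-- Negation completeness of maximal consistent sets. -/
private lemma neg_mem_of_not_mem {F : Set (Formula V A)} (hF : MaxConsistent F)
    {φ : Formula V A} (h : φ ∉ F) : Formula.neg φ ∈ F := by
  by_cases hc : Consistent (insert φ F)
  · exact absurd ((hF.2 _ (Set.subset_insert _ _) hc) ▸ Set.mem_insert φ F) h
  · -- insert φ F inconsistent ⟹ Deriv F (¬φ)
    apply mem_of_deriv hF
    rw [Consistent, not_not] at hc
    obtain ⟨χ, h1, h2⟩ := hc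
    have d1 := deduction h1
    have d2 := deduction h2
    have t : Tautology (Formula.imp (.imp φ χ)
        (.imp (.imp φ (.neg χ)) (.neg φ))) := by
      intro v hn hi; simp only [hi, hn]; tauto
    exact Deriv.mp (Deriv.mp (Deriv.thm (Prv.taut t)) d1) d2

private lemma not_both {F : Set (Formula V A)} (hF : MaxConsistent F)
    {φ : Formula V A} (h1 : φ ∈ F) (h2 : Formula.neg φ ∈ F) : False :=
  hF.1 ⟨φ, Deriv.hyp h1, Deriv.hyp h2⟩

private lemma isWorld_maxcons {T₀ : Set V} {F₀ : Set (Formula V A)} :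
    ∀ {w : List (Triple V A)}, IsWorld T₀ F₀ w → MaxConsistent (worldF F₀ w)
  | [], h => h.1
  | (_, _, _) :: _, h => h.2.1.1

end SingleTransferAux

/-- Single transfer (Lemma 7): for adjacent worlds `w'` and `w = w' ⌢ (Xₙ,Tₙ,Fₙ)`
of the canonical model, if `Y ⊆ Xₙ`, then `B^T_Y φ ∈ F(w')` iff `B^T_Y φ ∈ F(w)`. -/
theorem single_transfer {V A : Type} (T₀ : Set V) (F₀ : Set (Formula V A))
    (w' : List (Triple V A)) (Xₙ Tₙ : Set V) (Fₙ : Set (Formula V A))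
    (hw : IsWorld T₀ F₀ ((Xₙ, Tₙ, Fₙ) :: w'))
    (T Y : Set V) (φ : Formula V A) (hY : Y ⊆ Xₙ) :
    Formula.bel T Y φ ∈ worldF F₀ w' ↔ Formula.bel T Y φ ∈ Fₙ := by
  obtain ⟨hw', hnode, htrans⟩ := hw
  have hF' : MaxConsistent (worldF F₀ w') := isWorld_maxcons hw'
  have hFₙ : MaxConsistent Fₙ := hnode.1
  constructor
  · intro h
    -- B ∈ F' ⟹ N B ∈ F' ⟹ B ∈ Fₙ
    have : Formula.bel ∅ Xₙ (.bel T Y φ) ∈ worldF F₀ w' :=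
      mem_of_deriv hF'
        (Deriv.mp (Deriv.thm (prv_pos_intro T Y Xₙ φ hY)) (Deriv.hyp h))
    exact htrans _ this
  · intro h
    by_contra hne
    have hneg : Formula.neg (.bel T Y φ) ∈ worldF F₀ w' :=
      neg_mem_of_not_mem hF' hne
    have : Formula.bel ∅ Xₙ (.neg (.bel T Y φ)) ∈ worldF F₀ w' :=
      mem_of_deriv hF'
        (Deriv.mp (Deriv.thm (prv_neg_intro' T Y Xₙ φ hY)) (Deriv.hyp hneg))
    exact not_both hFₙ h (htrans _ this)
end
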